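/- Assume s ≥ r and F is a finite field with q ≥ 2 elements. Each worker output C̃_i consists of p·u elements of F. Then: (i) for any computation strategy and any subset S ⊆ {0,…,N−1} for which there exists a function D with D((C̃_i)_{i∈S}) = A^T B for all inputs A, B, the total number of field elements received by the master satisfies |S|·p·u ≥ r·t; (ii) if moreover N ≥ mn and q ≥ N, the (1,m)-polynomial code admits such a decoder for every S with |S| = mn, for which |S|·p·u = r·t exactly. Hence the minimum communication load for distributed matrix multiplication is exactly r·t field elements (i.e., r·t·log₂ q bits), and it is achieved by the polynomial code. -/

import Mathlib

open Matrix BigOperators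

/-- Theorem 3: each worker output consists of `p·u` field elements.
(i) For any computation strategy, any subset `S` of workers from whose outputs the
master can decode `Aᵀ B` must deliver at least `r·t = (m·p)·(n·u)` field elements,
i.e. `|S|·p·u ≥ r·t`. (ii) If `N ≥ mn` and the field has at least `N` elements, the
(1,m)-polynomial code admits such a decoder for every `S` with `|S| = mn`, and then
`|S|·p·u = r·t` exactly: the minimum communication load `r·t` is achieved. -/
theorem communication_load_optimal {F : Type*} [Field F] [Fintype F]
    {s p u m n N : ℕ}
    (hm : 0 < m) (hn : 0 < n) (hp : 0 < p) (hu : 0 < u) (hs : m * p ≤ s) :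
    (∀ (f : Fin N → Matrix (Fin s) (Fin m × Fin p) F → Matrix (Fin s) (Fin p) F)
       (g : Fin N → Matrix (Fin s) (Fin n × Fin u) F → Matrix (Fin s) (Fin u) F)
       (S : Finset (Fin N)),
      (∃ D : ({i : Fin N // i ∈ S} → Matrix (Fin p) (Fin u) F) →
             Matrix (Fin m × Fin p) (Fin n × Fin u) F,
        ∀ (A : Matrix (Fin s) (Fin m × Fin p) F) (B : Matrix (Fin s) (Fin n × Fin u) F),
          D (fun i => (f i.1 A)ᵀ * g i.1 B) = Aᵀ * B) →
      (m * p) * (n * u) ≤ S.card * (p * u))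
    ∧
    (m * n ≤ N → N ≤ Fintype.card F →
      ∀ x : Fin N → F, Function.Injective x →
        ∀ S : Finset (Fin N), S.card = m * n →
          (∃ D : ({i : Fin N // i ∈ S} → Matrix (Fin p) (Fin u) F) →
                 Matrix (Fin m × Fin p) (Fin n × Fin u) F,
            ∀ (A : Matrix (Fin s) (Fin m × Fin p) F) (B : Matrix (Fin s) (Fin n × Fin u) F),
              D (fun i =>
                  (∑ j : Fin m, x i.1 ^ (j : ℕ) • A.submatrix id (fun a => (j, a)))ᵀ *
                  (∑ k : Fin n, x i.1 ^ ((k : ℕ) * m) • B.submatrix id (fun b => (k, b))))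
                = Aᵀ * B)
          ∧ S.card * (p * u) = (m * p) * (n * u)) := by
  constructor
  · -- converse bound
    rintro f g S ⟨D, hD⟩
    classical
    set e : Fin m × Fin p → Fin s := fun jp => Fin.castLE hs (finProdFinEquiv jp) with he_def
    have he : Function.Injective e :=
      (Fin.castLE_injective hs).comp finProdFinEquiv.injective
    set A0 : Matrix (Fin s) (Fin m × Fin p) F := fun i j => if e j = i then 1 else 0 with hA0
    set Bf : Matrix (Fin m × Fin p) (Fin n × Fin u) F → Matrix (Fin s) (Fin n × Fin u) F :=
      fun M => fun i k => ∑ j, if e j = i then M j k else 0 with hBf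
    have key : ∀ M, A0ᵀ * Bf M = M := by
      intro M
      ext j k
      simp only [Matrix.mul_apply, Matrix.transpose_apply, hA0, hBf, ite_mul, one_mul,
        zero_mul, Finset.sum_ite_eq, Finset.mem_univ, if_true, he.eq_iff]
      change (A0ᵀ * Bf M) j k = M j k
      simp only [Matrix.mul_apply, Matrix.transpose_apply]
      simp [hA0, hBf, he.eq_iff]
    have hinj : Function.Injective
        (fun M : Matrix (Fin m × Fin p) (Fin n × Fin u) F =>
          fun i : {i : Fin N // i ∈ S} => (f i.1 A0)ᵀ * g i.1 (Bf M)) := by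
      intro M M' h
      have h1 := hD A0 (Bf M)
      have h2 := hD A0 (Bf M')
      rw [key] at h1 h2
      rw [← h1, ← h2]
      exact congrArg D h
    have hcard := Fintype.card_le_of_injective _ hinj
    have hq : 1 < Fintype.card F := Fintype.one_lt_card
    rw [← Nat.pow_le_pow_iff_right hq]
    calc Fintype.card F ^ (m * p * (n * u))
        = Fintype.card (Matrix (Fin m × Fin p) (Fin n × Fin u) F) := by
          rw [Fintype.card_eq_nat_card, Fintype.card_eq_nat_card]
          simp [Matrix, Nat.card_fun, ← pow_mul, mul_assoc, mul_comm, mul_left_comm]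
      _ ≤ Fintype.card ({i : Fin N // i ∈ S} → Matrix (Fin p) (Fin u) F) := hcard
      _ = Fintype.card F ^ (S.card * (p * u)) := by
          rw [Fintype.card_eq_nat_card, Fintype.card_eq_nat_card]
          simp [Matrix, Nat.card_fun, ← pow_mul, Fintype.card_coe,
            mul_assoc, mul_comm, mul_left_comm]
  · -- achievability via the polynomial code
    intro hmn hqN x hx S hS
    classical
    refine ⟨?_, by rw [hS]; ring⟩
    set eS : Fin (m * n) ≃ {i : Fin N // i ∈ S} := ((S.equivFin).trans (finCongr hS)).symm
      with heS
    set y : Fin (m * n) → F := fun l => x (eS l).1 with hy_def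
    have hy : Function.Injective y :=
      hx.comp (Subtype.val_injective.comp eS.injective)
    have hVdet : IsUnit (Matrix.vandermonde y).det :=
      isUnit_iff_ne_zero.mpr (Matrix.det_vandermonde_ne_zero_iff.mpr hy)
    set E : Fin m × Fin n ≃ Fin (m * n) :=
      (Equiv.prodComm (Fin m) (Fin n)).trans (finProdFinEquiv.trans (finCongr (Nat.mul_comm n m)))
      with hE
    have hEval : ∀ (j : Fin m) (k : Fin n), ((E (j, k)) : ℕ) = (j : ℕ) + (k : ℕ) * m := by
      intro j k
      simp [hE, Nat.mul_comm]
    have hinvV : ∀ v : Fin (m * n) → F,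
        (Matrix.vandermonde y)⁻¹ *ᵥ ((Matrix.vandermonde y) *ᵥ v) = v := by
      intro v
      rw [Matrix.mulVec_mulVec, Matrix.nonsing_inv_mul _ hVdet, Matrix.one_mulVec]
    refine ⟨fun c => Matrix.of fun jp ku =>
      ((Matrix.vandermonde y)⁻¹ *ᵥ fun l => c (eS l) jp.2 ku.2) (E (jp.1, ku.1)), ?_⟩
    intro A B
    ext ⟨j, a⟩ ⟨k, b⟩
    have hw : (fun l =>
          ((∑ j' : Fin m, x (eS l).1 ^ (j' : ℕ) • A.submatrix id (fun a => (j', a)))ᵀ *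
           (∑ k' : Fin n, x (eS l).1 ^ ((k' : ℕ) * m) • B.submatrix id (fun b => (k', b)))) a b)
        = (Matrix.vandermonde y) *ᵥ
            (fun d => (Aᵀ * B) ((E.symm d).1, a) ((E.symm d).2, b)) := by
      funext l
      rw [Matrix.mulVec, dotProduct,
        ← Equiv.sum_comp E (fun d => Matrix.vandermonde y l d *
          (Aᵀ * B) ((E.symm d).1, a) ((E.symm d).2, b))]
      simp only [Equiv.symm_apply_apply, Matrix.vandermonde_apply]
      rw [Matrix.mul_apply, Fintype.sum_prod_type]
      simp only [Matrix.transpose_apply, Matrix.sum_apply, Matrix.smul_apply,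
        Matrix.submatrix_apply, smul_eq_mul, id, Matrix.mul_apply, Finset.sum_mul_sum]
      rw [Finset.sum_comm]
      refine Finset.sum_congr rfl fun j' _ => ?_
      rw [Finset.sum_comm]
      refine Finset.sum_congr rfl fun k' _ => ?_
      rw [hEval, pow_add, Finset.mul_sum]
      refine Finset.sum_congr rfl fun i _ => ?_
      ring
    show ((Matrix.vandermonde y)⁻¹ *ᵥ _) (E (j, k)) = _
    rw [hw, hinvV]
    simp
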